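/- Let a ∈ ℝ, C > 0, δ > 0, and let f : ℝ → ℂ be a measurable function with f(x) = 0 for x > −a and |f(x)| ≤ C e^{δx} for all x ≤ −a. Then the function F(k) = ∫_{−∞}^{−a} f(x) e^{ikx} dx is well defined and complex differentiable (holomorphic) at every point of the half-plane {k ∈ ℂ : Im k < δ}. -/

import Mathlib

open Complex MeasureTheory Set

lemma exp_mul_integrableOn_Iic (b c : ℝ) (hb : 0 < b) :
    IntegrableOn (fun x : ℝ => Real.exp (b * x)) (Iic c) := by
  refine (integrable_indicator_iff measurableSet_Iic).mp ?_
  have h := (integrable_indicator_iff measurableSet_Iic).mpr (integrableOn_exp_Iic (b * c))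
  have h2 := (integrable_comp_mul_left_iff ((Iic (b * c)).indicator Real.exp) hb.ne').mpr h
  have heq : (fun x : ℝ => (Iic (b * c)).indicator Real.exp (b * x))
      = (Iic c).indicator (fun x : ℝ => Real.exp (b * x)) := by
    funext x
    by_cases hx : x ≤ c
    · rw [indicator_of_mem (by simpa using (mul_le_mul_iff_right₀ hb).mpr hx),
        indicator_of_mem (by simpa using hx)]
    · rw [indicator_of_notMem
        (by simpa using fun h => hx ((mul_le_mul_iff_right₀ hb).mp h)),
        indicator_of_notMem (by simpa using hx)]
  rwa [heq] at h2

lemma fourier_cont (k : ℂ) : Continuous fun x : ℝ => Complex.exp (Complex.I * k * x) :=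
  Complex.continuous_exp.comp (continuous_const.mul Complex.continuous_ofReal)

lemma integrand_integrable (a C δ : ℝ)
    (f : ℝ → ℂ) (hf : Measurable f)
    (hbound : ∀ x : ℝ, x ≤ -a → ‖f x‖ ≤ C * Real.exp (δ * x))
    (k : ℂ) (hk : k.im < δ) :
    IntegrableOn (fun x : ℝ => f x * Complex.exp (Complex.I * k * x)) (Iic (-a)) := by
  have hmeas : AEStronglyMeasurable (fun x : ℝ => f x * Complex.exp (Complex.I * k * x))
      (volume.restrict (Iic (-a))) :=
    (hf.aestronglyMeasurable.mul (fourier_cont k).aestronglyMeasurable).restrict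
  refine Integrable.mono' ((exp_mul_integrableOn_Iic (δ - k.im) (-a)
    (by linarith)).const_mul C) hmeas ?_
  rw [ae_restrict_iff' measurableSet_Iic]
  filter_upwards with x hx
  have hre : (Complex.I * k * (x : ℂ)).re = -k.im * x := by simp [Complex.mul_re]
  rw [norm_mul, Complex.norm_exp, hre]
  calc ‖f x‖ * Real.exp (-k.im * x)
      ≤ (C * Real.exp (δ * x)) * Real.exp (-k.im * x) := by
        gcongr; exact hbound x hx
    _ = C * Real.exp ((δ - k.im) * x) := by
        rw [mul_assoc, ← Real.exp_add, show δ * x + -k.im * x = (δ - k.im) * x from by ring]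

/-- the half-line Fourier transform of a function supported on `(−∞,−a]`
with exponential bound `|f(x)| ≤ C e^{δx}` is well defined and holomorphic on the
half-plane `Im k < δ`. -/
theorem minus_function_regular_lower_halfplane (a C δ : ℝ) (hC : 0 < C) (hδ : 0 < δ)
    (f : ℝ → ℂ) (hf : Measurable f)
    (hsupp : ∀ x : ℝ, -a < x → f x = 0)
    (hbound : ∀ x : ℝ, x ≤ -a → ‖f x‖ ≤ C * Real.exp (δ * x)) :
    ∀ k : ℂ, k.im < δ →
      IntegrableOn (fun x : ℝ => f x * Complex.exp (Complex.I * k * x)) (Iic (-a)) ∧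
      DifferentiableAt ℂ
        (fun k' : ℂ => ∫ x in Iic (-a), f x * Complex.exp (Complex.I * k' * x)) k := by
  intro k hk
  refine ⟨integrand_integrable a C δ f hf hbound k hk, ?_⟩
  set ε : ℝ := (δ - k.im) / 2 with hε
  have hεpos : 0 < ε := by rw [hε]; linarith
  set M : ℝ := Real.exp (ε * a + 3 * ε * |a|) with hM
  have hcont' : ∀ k' : ℂ,
      Continuous fun x : ℝ => Complex.I * (x : ℂ) * Complex.exp (Complex.I * k' * x) :=
    fun k' => (continuous_const.mul Complex.continuous_ofReal).mul (fourier_cont k')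
  have key := hasDerivAt_integral_of_dominated_loc_of_deriv_le (𝕜 := ℂ)
    (μ := volume.restrict (Iic (-a)))
    (F := fun k' : ℂ => fun x : ℝ => f x * Complex.exp (Complex.I * k' * x))
    (F' := fun k' : ℂ => fun x : ℝ =>
      f x * (Complex.I * (x : ℂ) * Complex.exp (Complex.I * k' * x)))
    (x₀ := k)
    (bound := fun x => C * M * (|a| * Real.exp (ε * x) + (2 / ε) * Real.exp ((ε / 2) * x)))
    (Metric.ball_mem_nhds k hεpos)
    (Filter.Eventually.of_forall fun k' =>
      (hf.aestronglyMeasurable.mul (fourier_cont k').aestronglyMeasurable).restrict)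
    (integrand_integrable a C δ f hf hbound k hk)
    ((hf.aestronglyMeasurable.mul (hcont' k).aestronglyMeasurable).restrict)
    ?_ ?_ ?_
  · exact key.2.differentiableAt
  · -- bound
    rw [ae_restrict_iff' measurableSet_Iic]
    filter_upwards with x hx
    intro k' hk'
    have hx' : x ≤ -a := hx
    have habsd : ‖k' - k‖ < ε := by
      rw [Metric.mem_ball, Complex.dist_eq] at hk'; exact hk'
    have h1 : |(k' - k).im| ≤ ‖k' - k‖ := Complex.abs_im_le_norm _
    have h2 := abs_lt.mp (lt_of_le_of_lt h1 habsd)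
    rw [Complex.sub_im] at h2
    have him1 : k'.im < k.im + ε := by linarith [h2.2]
    have him2 : k.im - ε < k'.im := by linarith [h2.1]
    set b : ℝ := δ - k'.im with hb
    have hbε : ε ≤ b := by rw [hb]; rw [hε] at him1 ⊢; linarith
    have hb3 : b ≤ 3 * ε := by rw [hb]; rw [hε] at him2 ⊢; linarith
    have hbpos : 0 < b := lt_of_lt_of_le hεpos hbε
    have hre : (Complex.I * k' * (x : ℂ)).re = -k'.im * x := by simp [Complex.mul_re]
    have hnorm : ‖f x * (Complex.I * (x : ℂ) * Complex.exp (Complex.I * k' * x))‖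
        = ‖f x‖ * |x| * Real.exp (-k'.im * x) := by
      simp only [norm_mul, Complex.norm_exp, hre,
        Complex.norm_I, Complex.norm_real, Real.norm_eq_abs, one_mul]
      ring
    rw [hnorm]
    have hEδ : Real.exp (δ * x) * Real.exp (-k'.im * x) = Real.exp (b * x) := by
      rw [← Real.exp_add, hb]; congr 1; ring
    have step1 : ‖f x‖ * |x| * Real.exp (-k'.im * x)
        ≤ C * |x| * Real.exp (b * x) := by
      calc ‖f x‖ * |x| * Real.exp (-k'.im * x)
          ≤ (C * Real.exp (δ * x)) * |x| * Real.exp (-k'.im * x) := by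
            gcongr; exact hbound x hx
        _ = C * |x| * (Real.exp (δ * x) * Real.exp (-k'.im * x)) := by ring
        _ = C * |x| * Real.exp (b * x) := by rw [hEδ]
    refine step1.trans ?_
    have hexp : Real.exp (b * x) ≤ M * Real.exp (ε * x) := by
      have hxa : x + a ≤ 0 := by linarith [hx']
      have h1' : Real.exp (b * (x + a)) ≤ Real.exp (ε * (x + a)) := by
        apply Real.exp_le_exp.mpr; nlinarith
      have h2' : Real.exp (-(b * a)) ≤ Real.exp (3 * ε * |a|) := by
        apply Real.exp_le_exp.mpr
        have hba : |b * a| ≤ 3 * ε * |a| := by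
          rw [abs_mul, abs_of_pos hbpos]
          exact mul_le_mul_of_nonneg_right hb3 (abs_nonneg _)
        linarith [neg_abs_le (b * a)]
      calc Real.exp (b * x) = Real.exp (b * (x + a)) * Real.exp (-(b * a)) := by
            rw [← Real.exp_add]; congr 1; ring
        _ ≤ Real.exp (ε * (x + a)) * Real.exp (3 * ε * |a|) :=
            mul_le_mul h1' h2' (Real.exp_pos _).le (Real.exp_pos _).le
        _ = M * Real.exp (ε * x) := by
            rw [hM, ← Real.exp_add, ← Real.exp_add]; congr 1; ring
    have habs : |x| ≤ |a| + (2 / ε) * Real.exp (-(ε / 2) * x) := by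
      have hnx : -x ≤ (2 / ε) * Real.exp (-(ε / 2) * x) := by
        have h1'' : (ε / 2) * (-x) ≤ Real.exp ((ε / 2) * (-x)) := by
          linarith [Real.add_one_le_exp ((ε / 2) * (-x))]
        have h2'' : (ε / 2) * (-x) ≤ Real.exp (-(ε / 2) * x) := by
          rwa [show -(ε / 2) * x = (ε / 2) * (-x) from by ring]
        have h3'' := mul_le_mul_of_nonneg_left h2'' (by positivity : (0:ℝ) ≤ 2 / ε)
        calc -x = (2 / ε) * ((ε / 2) * (-x)) := by field_simp
          _ ≤ (2 / ε) * Real.exp (-(ε / 2) * x) := h3''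
      have hax : x ≤ |a| := le_trans hx (neg_le_abs a)
      have hpos2 : 0 ≤ (2 / ε) * Real.exp (-(ε / 2) * x) := by positivity
      rcases abs_cases x with ⟨h, _⟩ | ⟨h, _⟩
      · rw [h]; linarith
      · rw [h]; linarith [abs_nonneg a]
    have hE2 : Real.exp (-(ε / 2) * x) * Real.exp (ε * x) = Real.exp ((ε / 2) * x) := by
      rw [← Real.exp_add]; congr 1; ring
    calc C * |x| * Real.exp (b * x)
        ≤ C * (|a| + (2 / ε) * Real.exp (-(ε / 2) * x)) * (M * Real.exp (ε * x)) := by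
          apply mul_le_mul (by gcongr) hexp (Real.exp_pos _).le
          positivity
      _ = C * M * (|a| * Real.exp (ε * x) + (2 / ε) * Real.exp ((ε / 2) * x)) := by
          linear_combination (C * M * (2 / ε)) * hE2
  · -- bound integrable
    exact (((exp_mul_integrableOn_Iic ε (-a) hεpos).const_mul |a|).add
      ((exp_mul_integrableOn_Iic (ε / 2) (-a) (by linarith)).const_mul (2 / ε))).const_mul
      (C * M)
  · -- differentiability
    filter_upwards with x
    intro k' _
    have h1 : HasDerivAt (fun z : ℂ => Complex.I * z * (x : ℂ)) (Complex.I * (x : ℂ)) k' := by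
      simpa using ((hasDerivAt_id k').const_mul Complex.I).mul_const (x : ℂ)
    have h3 := (h1.cexp).const_mul (f x)
    exact h3.congr_deriv (by ring)
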